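/- Let 0 < b < a < 2 with powers defined via the principal branch on the upper half-plane, and suppose 1 < b < 2. Then there exists z in the open upper half-plane such that Im((z^a − 1)/(z^b − 1)) < 0 and Re((z^a − 1)/(z^b − 1)) > 0. Consequently G₀(a,b) := inf{ arg((z^a−1)/(z^b−1))/π : z in the upper half-plane } < 0. -/

import Mathlib

/-- The argument function with values in `[0, 2π)`. -/
noncomputable def Arg2 (z : ℂ) : ℝ :=
  if Complex.arg z < 0 then Complex.arg z + 2 * Real.pi else Complex.arg z

open Real Complex in
lemma polar_cpow' (r θ c : ℝ) (hr : 0 < r) (hθ1 : -π < θ) (hθ2 : θ ≤ π) :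
    ((r : ℂ) * Complex.exp (θ * Complex.I)) ^ (c : ℂ) =
      ((r ^ c : ℝ) : ℂ) * Complex.exp ((c * θ : ℝ) * Complex.I) := by
  have hz : (r : ℂ) * Complex.exp (θ * Complex.I) =
      Complex.exp ((Real.log r : ℂ) + θ * Complex.I) := by
    rw [Complex.exp_add, ← Complex.ofReal_exp, Real.exp_log hr]
  rw [hz, Complex.cpow_def_of_ne_zero (Complex.exp_ne_zero _),
    Complex.log_exp (by simpa) (by simpa)]
  rw [Real.rpow_def_of_pos hr, Complex.ofReal_exp, ← Complex.exp_add]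
  congr 1
  push_cast
  ring

open Real Complex in
lemma polar_re_im' (r θ c : ℝ) (hr : 0 < r) (hθ1 : -π < θ) (hθ2 : θ ≤ π) :
    ((((r : ℂ) * Complex.exp (θ * Complex.I)) ^ (c : ℂ)).re = r ^ c * Real.cos (c * θ)) ∧
    ((((r : ℂ) * Complex.exp (θ * Complex.I)) ^ (c : ℂ)).im = r ^ c * Real.sin (c * θ)) := by
  rw [polar_cpow' r θ c hr hθ1 hθ2]
  constructor <;> simp [Complex.exp_mul_I, Complex.ext_iff, ← Complex.ofReal_cos,
    ← Complex.ofReal_sin, ← Complex.ofReal_mul]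

open Real in
lemma Arg2_nonneg' (z : ℂ) : 0 ≤ Arg2 z := by
  unfold Arg2
  split
  · linarith [Complex.neg_pi_lt_arg z, Real.pi_pos]
  · linarith [not_lt.mp (by assumption : ¬ Complex.arg z < 0)]

open Real in
lemma Arg2_lt_two_pi' (z : ℂ) : Arg2 z < 2 * π := by
  unfold Arg2
  split
  · linarith [(by assumption : Complex.arg z < 0)]
  · linarith [Complex.arg_le_pi z, Real.pi_pos]

lemma key_ineq' (A B sA cA cB s : ℝ) (hA : 0 < A) (hB : 0 < B)
    (hsA1 : -1 ≤ sA) (hsA2 : sA ≤ 1) (hcA1 : -1 ≤ cA) (hcA2 : cA ≤ 1)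
    (hcB1 : -1 ≤ cB) (hcB2 : cB ≤ 1) (hs : 0 < s) (hs1 : s ≤ 1)
    (hABle : A * B ≤ A) (hsplit : A = B * (s / 4)) :
    A * sA * (B * cB - 1) - (A * cA - 1) * (B * (-s)) < 0 := by
  have hAB : 0 < A * B := mul_pos hA hB
  have p1 : sA * cB ≤ 1 := by nlinarith
  have p2 : cA * s ≤ 1 := by nlinarith
  have h1 : A * B * (sA * cB) ≤ A * B := mul_le_of_le_one_right hAB.le p1
  have h2 : A * B * (cA * s) ≤ A * B := mul_le_of_le_one_right hAB.le p2
  have h3 : A * (-sA) ≤ A := mul_le_of_le_one_right hA.le (by linarith)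
  have hBs : 0 < B * s := mul_pos hB hs
  nlinarith [h1, h2, h3, hABle, hBs, hsplit]

open Real Complex in
theorem stmt8 (a b : ℝ) (hb : 1 < b) (hba : b < a) (ha : a < 2) :
    (∃ z : ℂ, 0 < z.im ∧ ((z ^ (a:ℂ) - 1) / (z ^ (b:ℂ) - 1)).im < 0 ∧
       0 < ((z ^ (a:ℂ) - 1) / (z ^ (b:ℂ) - 1)).re) ∧
    sInf {x : ℝ | ∃ z : ℂ, 0 < z.im ∧
       x = (Arg2 (z ^ (a:ℂ) - 1) - Arg2 (z ^ (b:ℂ) - 1)) / Real.pi} < 0 := by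
  have hπ := Real.pi_pos
  have hb0 : (0:ℝ) < b := by linarith
  have ha0 : (0:ℝ) < a := by linarith
  have hab : (0:ℝ) < a - b := by linarith
  set θ : ℝ := (π / b + π) / 2 with hθdef
  have hbπ : π < b * π := (lt_mul_iff_one_lt_left hπ).mpr hb
  have hπb : π / b < π := by
    rw [div_lt_iff₀ hb0]; linarith
  have hθ1 : 0 < θ := by positivity
  have hθ2 : θ < π := by rw [hθdef]; linarith
  have hbθ : b * θ = (π + b * π) / 2 := by
    rw [hθdef]; field_simp
  have hbθ1 : π < b * θ := by rw [hbθ]; linarith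
  have hbθ2 : b * θ < 2 * π := by
    rw [hbθ]
    linarith [mul_lt_mul_of_pos_right (show b < 2 by linarith) hπ]
  have haθ1 : π < a * θ := by
    have : 0 < (a - b) * θ := mul_pos hab hθ1
    nlinarith [hbθ1]
  have haθ2 : a * θ < 2 * π := by
    have h1 : a * θ < 2 * θ := mul_lt_mul_of_pos_right (by linarith) hθ1
    linarith
  have sinneg : ∀ c : ℝ, π < c → c < 2 * π → Real.sin c < 0 := by
    intro c h1 h2
    have h3 : 0 < Real.sin (c - π) :=
      Real.sin_pos_of_pos_of_lt_pi (by linarith) (by linarith)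
    rw [Real.sin_sub_pi] at h3
    linarith
  have hsA : Real.sin (a * θ) < 0 := sinneg _ haθ1 haθ2
  have hsB : Real.sin (b * θ) < 0 := sinneg _ hbθ1 hbθ2
  set s : ℝ := -Real.sin (b * θ) with hsdef
  have hs : 0 < s := by rw [hsdef]; linarith
  have hs1 : s ≤ 1 := by
    have := Real.neg_one_le_sin (b * θ); rw [hsdef]; linarith
  set r : ℝ := (s / 4) ^ (1 / (a - b)) with hrdef
  have hs4 : 0 < s / 4 := by linarith
  have hr0 : 0 < r := Real.rpow_pos_of_pos hs4 _
  have hr1 : r < 1 := Real.rpow_lt_one (le_of_lt hs4) (by linarith) (by positivity)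
  have hrab : r ^ (a - b) = s / 4 := by
    rw [hrdef, ← Real.rpow_mul (le_of_lt hs4), one_div, inv_mul_cancel₀ (ne_of_gt hab),
      Real.rpow_one]
  have hsplit : r ^ a = r ^ b * (s / 4) := by
    have h1 : a = b + (a - b) := by ring
    rw [h1, Real.rpow_add hr0, hrab]
  set A : ℝ := r ^ a with hAdef
  set B : ℝ := r ^ b with hBdef
  have hA : 0 < A := Real.rpow_pos_of_pos hr0 _
  have hB : 0 < B := Real.rpow_pos_of_pos hr0 _
  have hA1 : A < 1 := Real.rpow_lt_one (le_of_lt hr0) hr1 ha0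
  have hB1 : B < 1 := Real.rpow_lt_one (le_of_lt hr0) hr1 hb0
  have hABle : A * B ≤ A := mul_le_of_le_one_right hA.le hB1.le
  set z : ℂ := (r : ℂ) * Complex.exp (θ * Complex.I) with hzdef
  have hzim : 0 < z.im := by
    have h1 : z.im = r * Real.sin θ := by
      rw [hzdef]
      simp [Complex.exp_mul_I, ← Complex.ofReal_cos, ← Complex.ofReal_sin]
    rw [h1]
    exact mul_pos hr0 (Real.sin_pos_of_pos_of_lt_pi hθ1 hθ2)
  have hra := polar_re_im' r θ a hr0 (by linarith) (le_of_lt hθ2)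
  have hrb := polar_re_im' r θ b hr0 (by linarith) (le_of_lt hθ2)
  set N : ℂ := z ^ (a:ℂ) - 1 with hNdef
  set D : ℂ := z ^ (b:ℂ) - 1 with hDdef
  have hNre : N.re = A * Real.cos (a * θ) - 1 := by
    rw [hNdef, Complex.sub_re, Complex.one_re, hra.1]
  have hNim : N.im = A * Real.sin (a * θ) := by
    rw [hNdef, Complex.sub_im, Complex.one_im, hra.2, sub_zero]
  have hDre : D.re = B * Real.cos (b * θ) - 1 := by
    rw [hDdef, Complex.sub_re, Complex.one_re, hrb.1]
  have hDim : D.im = B * Real.sin (b * θ) := by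
    rw [hDdef, Complex.sub_im, Complex.one_im, hrb.2, sub_zero]
  have hNre0 : N.re < 0 := by
    rw [hNre]
    have h1 : A * Real.cos (a * θ) ≤ A * 1 :=
      mul_le_mul_of_nonneg_left (Real.cos_le_one _) hA.le
    linarith
  have hDre0 : D.re < 0 := by
    rw [hDre]
    have h1 : B * Real.cos (b * θ) ≤ B * 1 :=
      mul_le_mul_of_nonneg_left (Real.cos_le_one _) hB.le
    linarith
  have hNim0 : N.im < 0 := by
    rw [hNim]; exact mul_neg_of_pos_of_neg hA hsA
  have hDim0 : D.im < 0 := by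
    rw [hDim]; exact mul_neg_of_pos_of_neg hB hsB
  have hK : N.im * D.re - N.re * D.im < 0 := by
    rw [hNim, hNre, hDim, hDre]
    have hsBs : Real.sin (b * θ) = -s := by rw [hsdef]; ring
    rw [hsBs]
    exact key_ineq' A B (Real.sin (a * θ)) (Real.cos (a * θ)) (Real.cos (b * θ)) s
      hA hB (Real.neg_one_le_sin _) (Real.sin_le_one _) (Real.neg_one_le_cos _)
      (Real.cos_le_one _) (Real.neg_one_le_cos _) (Real.cos_le_one _) hs hs1 hABle hsplit
  have hD0 : D ≠ 0 := fun h => by rw [h] at hDim0; simp at hDim0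
  have hN0 : N ≠ 0 := fun h => by rw [h] at hNim0; simp at hNim0
  have hnsq : 0 < Complex.normSq D := Complex.normSq_pos.mpr hD0
  have hIm : (N / D).im < 0 := by
    rw [Complex.div_im, div_sub_div_same]
    exact div_neg_of_neg_of_pos hK hnsq
  have hRe : 0 < (N / D).re := by
    rw [Complex.div_re]
    have h1 := mul_pos_of_neg_of_neg hNre0 hDre0
    have h2 := mul_pos_of_neg_of_neg hNim0 hDim0
    positivity
  constructor
  · exact ⟨z, hzim, hIm, hRe⟩
  · have hargN : Complex.arg N < 0 := Complex.arg_neg_iff.mpr hNim0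
    have hargD : Complex.arg D < 0 := Complex.arg_neg_iff.mpr hDim0
    have hArg2N : Arg2 N = Complex.arg N + 2 * π := by unfold Arg2; rw [if_pos hargN]
    have hArg2D : Arg2 D = Complex.arg D + 2 * π := by unfold Arg2; rw [if_pos hargD]
    have hdiff : Complex.arg N - Complex.arg D = Complex.arg (N / D) := by
      have hang : ((Complex.arg (N / D) : ℝ) : Real.Angle) =
          ((Complex.arg N - Complex.arg D : ℝ) : Real.Angle) := by
        rw [Complex.arg_div_coe_angle hN0 hD0, Real.Angle.coe_sub]
      have hb1 : -π < Complex.arg N - Complex.arg D := by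
        linarith [Complex.neg_pi_lt_arg N]
      have hb2 : Complex.arg N - Complex.arg D ≤ π := by
        linarith [Complex.neg_pi_lt_arg D]
      calc Complex.arg N - Complex.arg D
          = ((Complex.arg N - Complex.arg D : ℝ) : Real.Angle).toReal :=
            (Real.Angle.toReal_coe_eq_self_iff.mpr ⟨hb1, hb2⟩).symm
        _ = ((Complex.arg (N / D) : ℝ) : Real.Angle).toReal := by rw [hang]
        _ = Complex.arg (N / D) :=
            Real.Angle.toReal_coe_eq_self_iff.mpr
              ⟨Complex.neg_pi_lt_arg _, Complex.arg_le_pi _⟩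
    have hargQ : Complex.arg (N / D) < 0 := Complex.arg_neg_iff.mpr hIm
    have hx0 : (Arg2 N - Arg2 D) / π < 0 := by
      apply div_neg_of_neg_of_pos _ hπ
      rw [hArg2N, hArg2D]
      have hlt : Complex.arg N - Complex.arg D < 0 := by rw [hdiff]; exact hargQ
      linarith
    have hmem : (Arg2 N - Arg2 D) / π ∈ {x : ℝ | ∃ w : ℂ, 0 < w.im ∧
        x = (Arg2 (w ^ (a:ℂ) - 1) - Arg2 (w ^ (b:ℂ) - 1)) / Real.pi} :=
      ⟨z, hzim, rfl⟩
    have hbdd : BddBelow {x : ℝ | ∃ w : ℂ, 0 < w.im ∧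
        x = (Arg2 (w ^ (a:ℂ) - 1) - Arg2 (w ^ (b:ℂ) - 1)) / Real.pi} := by
      refine ⟨-2, fun x hx => ?_⟩
      obtain ⟨w, hw, rfl⟩ := hx
      rw [le_div_iff₀ hπ]
      have h1 := Arg2_nonneg' (w ^ (a:ℂ) - 1)
      have h2 := Arg2_lt_two_pi' (w ^ (b:ℂ) - 1)
      linarith
    exact lt_of_le_of_lt (csInf_le hbdd hmem) hx0
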